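/- For every m ≥ 1 and every t ≥ 0, ‖T(t) − T_m(t)‖ ≥ e^{−t}(e^{√m t} − 1); indeed, every z ∈ X of the form z = (0,…,0,z_m,0,…) satisfies ‖T(t)z − T_m(t)z‖ = e^{−t}(e^{√m t} − 1)‖z‖. -/

import Mathlib

open MeasureTheory Filter Set
open scoped Topology Real ZeroAtInfty

/-- A strongly continuous (C₀) semigroup on a Banach space `X`. -/
def IsC0Semigroup {X : Type*} [NormedAddCommGroup X] [NormedSpace ℂ X]
    (T : ℝ → X →L[ℂ] X) : Prop :=
  T 0 = 1 ∧
  (∀ t s : ℝ, 0 ≤ t → 0 ≤ s → T (t + s) = (T t).comp (T s)) ∧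
  (∀ x : X, ContinuousOn (fun t => T t x) (Set.Ici (0 : ℝ)))

/-- The single-point indicator as an element of `c₀`. -/
def e_m (m : ℕ) : C₀(ℕ, ℂ) where
  toFun := fun n => if n = m then 1 else 0
  continuous_toFun := continuous_of_discreteTopology
  zero_at_infty' := by
    rw [cocompact_eq_cofinite]
    apply Filter.Tendsto.congr' _ tendsto_const_nhds
    filter_upwards [Set.Finite.compl_mem_cofinite (Set.finite_singleton m)] with n hn
    simp only [Set.mem_compl_iff, Set.mem_singleton_iff] at hn
    simp [hn]

lemma abs_c (m : ℕ) (t : ℝ) (ht : 0 ≤ t) :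
    ‖Complex.exp ((-1 + (m : ℂ) * Complex.I) * (t : ℂ)) *
      (1 - Complex.exp ((Real.sqrt m : ℂ) * (t : ℂ)))‖ =
    Real.exp (-t) * (Real.exp (Real.sqrt m * t) - 1) := by
  have h1 : Complex.exp ((Real.sqrt m : ℂ) * (t : ℂ)) =
      ((Real.exp (Real.sqrt m * t) : ℝ) : ℂ) := by
    rw [← Complex.ofReal_mul, Complex.ofReal_exp]
  rw [norm_mul, Complex.norm_exp, h1]
  have h2 : (1 : ℂ) - ((Real.exp (Real.sqrt m * t) : ℝ) : ℂ) =
      (((1 - Real.exp (Real.sqrt m * t)) : ℝ) : ℂ) := by push_cast; ring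
  rw [h2, Complex.norm_real, Real.norm_eq_abs]
  have hre : ((-1 + (m : ℂ) * Complex.I) * (t : ℂ)).re = -t := by
    simp [Complex.add_re, Complex.mul_re]
  rw [hre]
  have h3 : 1 ≤ Real.exp (Real.sqrt m * t) := by
    rw [Real.one_le_exp_iff]
    positivity
  rw [abs_of_nonpos (by linarith)]
  ring

/-- On `X = c₀`, the difference between the diagonal semigroup `T(t)` and its
perturbation `T_m(t)` satisfies `‖T(t) - T_m(t)‖ ≥ e^{-t}(e^{√m t} - 1)`; indeed
equality `‖T(t)z - T_m(t)z‖ = e^{-t}(e^{√m t} - 1)‖z‖` holds for every `z`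
supported on the `m`-th coordinate. -/
theorem T_Tm_difference_large
    (T : ℝ → C₀(ℕ, ℂ) →L[ℂ] C₀(ℕ, ℂ)) (hsgT : IsC0Semigroup T)
    (hT : ∀ t : ℝ, 0 ≤ t → ∀ (x : C₀(ℕ, ℂ)) (n : ℕ),
      T t x n = Complex.exp ((-1 + (n : ℂ) * Complex.I) * (t : ℂ)) * x n)
    (m : ℕ) (hm : 1 ≤ m)
    (Tm : ℝ → C₀(ℕ, ℂ) →L[ℂ] C₀(ℕ, ℂ)) (hsgTm : IsC0Semigroup Tm)
    (hTm : ∀ t : ℝ, 0 ≤ t → ∀ (x : C₀(ℕ, ℂ)) (n : ℕ),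
      Tm t x n = if n = m then
          Complex.exp ((-1 + (m : ℂ) * Complex.I) * (t : ℂ) + (Real.sqrt m : ℂ) * (t : ℂ)) * x m
        else Complex.exp ((-1 + (n : ℂ) * Complex.I) * (t : ℂ)) * x n) :
    ∀ t : ℝ, 0 ≤ t →
      Real.exp (-t) * (Real.exp (Real.sqrt m * t) - 1) ≤ ‖T t - Tm t‖ ∧
      ∀ z : C₀(ℕ, ℂ), (∀ n : ℕ, n ≠ m → z n = 0) →
        ‖T t z - Tm t z‖ = Real.exp (-t) * (Real.exp (Real.sqrt m * t) - 1) * ‖z‖ := by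
  intro t ht
  set c : ℂ := Complex.exp ((-1 + (m : ℂ) * Complex.I) * (t : ℂ)) *
      (1 - Complex.exp ((Real.sqrt m : ℂ) * (t : ℂ))) with hc
  -- key pointwise computation
  have key : ∀ z : C₀(ℕ, ℂ), (∀ n : ℕ, n ≠ m → z n = 0) →
      T t z - Tm t z = c • z := by
    intro z hz
    ext n
    simp only [ZeroAtInftyContinuousMap.coe_sub, Pi.sub_apply,
      ZeroAtInftyContinuousMap.coe_smul, Pi.smul_apply, smul_eq_mul]
    rw [hT t ht, hTm t ht]
    by_cases hn : n = m
    · subst hn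
      rw [if_pos rfl, Complex.exp_add]
      ring
    · rw [if_neg hn, hz n hn]
      ring
  have heq : ∀ z : C₀(ℕ, ℂ), (∀ n : ℕ, n ≠ m → z n = 0) →
      ‖T t z - Tm t z‖ = Real.exp (-t) * (Real.exp (Real.sqrt m * t) - 1) * ‖z‖ := by
    intro z hz
    rw [key z hz, norm_smul c z, abs_c m t ht]
  refine ⟨?_, heq⟩
  -- lower bound using the indicator
  have hzm : ∀ n : ℕ, n ≠ m → (e_m m) n = 0 := by
    intro n hn; simp [e_m, hn]
  have hval : (e_m m) m = 1 := by simp [e_m]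
  have hnorm1 : (1 : ℝ) ≤ ‖e_m m‖ := by
    have := BoundedContinuousFunction.norm_coe_le_norm (e_m m).toBCF m
    rw [ZeroAtInftyContinuousMap.norm_toBCF_eq_norm] at this
    simpa [hval] using this
  have hle : ‖T t (e_m m) - Tm t (e_m m)‖ ≤ ‖T t - Tm t‖ * ‖e_m m‖ := by
    have := (T t - Tm t).le_opNorm (e_m m)
    simpa using this
  rw [heq (e_m m) hzm] at hle
  have hC : 0 ≤ Real.exp (-t) * (Real.exp (Real.sqrt m * t) - 1) := by
    have h3 : 1 ≤ Real.exp (Real.sqrt m * t) := by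
      rw [Real.one_le_exp_iff]; positivity
    have := Real.exp_pos (-t)
    nlinarith
  have hz0 : 0 < ‖e_m m‖ := lt_of_lt_of_le one_pos hnorm1
  have := le_of_mul_le_mul_right hle hz0
  exact this
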